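/- For every probability measure μ on E_Δ and every t ≥ 0, M^μ_{t+} := ∩_{s>t} M^μ_s equals G^{μ,2}_t := {Λ ⊂ Ω : there exist Λ' ∈ F^0_{t+} and Γ ∈ F^0_{t+} with Λ △ Λ' ⊂ Γ and P^h_μ(Γ; t<ζ) = 0}. -/

import Mathlib

open MeasureTheory Set Filter
open scoped NNReal ENNReal

noncomputable section

variable {S : Type*} [MeasurableSpace S] {Ω : Type*}

/-- The natural filtration `F⁰_t = σ(X_s : s ∈ [0,t])` of the process `X`. -/
def F0 (X : ℝ≥0 → Ω → S) (t : ℝ≥0) : MeasurableSpace Ω :=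
  ⨆ s ∈ Set.Iic t, MeasurableSpace.comap (X s) inferInstance

/-- `F⁰_∞ = σ(X_s : s ≥ 0)`. -/
def F0inf (X : ℝ≥0 → Ω → S) : MeasurableSpace Ω :=
  ⨆ s : ℝ≥0, MeasurableSpace.comap (X s) inferInstance

/-- `F⁰_{t+} = ⋂_{s > t} F⁰_s`. -/
def F0plus (X : ℝ≥0 → Ω → S) (t : ℝ≥0) : MeasurableSpace Ω :=
  ⨅ s ∈ Set.Ioi t, F0 X s

/-- The life time `ζ(ω) = inf {t ≥ 0 : X_t(ω) = Δ}` (with value `∞` if the path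
never reaches the cemetery `Δ`). -/
def lifetime (Δ : S) (X : ℝ≥0 → Ω → S) (ω : Ω) : ℝ≥0∞ :=
  ⨅ (t : ℝ≥0) (_ : X t ω = Δ), (t : ℝ≥0∞)

variable (Δ : S)

/-- `Q̄_{x,t}[f ; t < ζ] := h(x)·E^h_x[e^{αt}·f/h(X_t) ; t < ζ]`, the σ-finite
distribution up to time `t` applied to a nonnegative integrand `f`. -/
def Qbar (α : ℝ) (h : S → ℝ≥0∞) (X : ℝ≥0 → Ω → S)
    (P : S → @Measure Ω (F0inf X)) (x : S) (t : ℝ≥0) (f : Ω → ℝ≥0∞) : ℝ≥0∞ :=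
  h x * ∫⁻ ω in {ω | (t : ℝ≥0∞) < lifetime Δ X ω},
      ENNReal.ofReal (Real.exp (α * (t : ℝ))) * f ω * (h (X t ω))⁻¹ ∂(P x)

/-- `Q̄_{x,t}(Λ ; t < ζ)` of a set `Λ`. -/
def QbarSet (α : ℝ) (h : S → ℝ≥0∞) (X : ℝ≥0 → Ω → S)
    (P : S → @Measure Ω (F0inf X)) (x : S) (t : ℝ≥0) (Λ : Set Ω) : ℝ≥0∞ :=
  Qbar Δ α h X P x t (Λ.indicator 1)

/-- `Q̄_{μ,t}(Λ ; t < ζ) = ∫ Q̄_{x,t}(Λ ; t < ζ) μ(dx)` (note `Q̄_{Δ,t} = 0`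
automatically since `h Δ = 0`). -/
def Qmu (α : ℝ) (h : S → ℝ≥0∞) (X : ℝ≥0 → Ω → S)
    (P : S → @Measure Ω (F0inf X)) (μ : Measure S) (t : ℝ≥0) (Λ : Set Ω) : ℝ≥0∞ :=
  ∫⁻ x, QbarSet Δ α h X P x t Λ ∂μ

/-- `P^h_μ(Λ) = ∫ P^h_x(Λ) μ(dx)`. -/
def Pmu (X : ℝ≥0 → Ω → S) (P : S → @Measure Ω (F0inf X)) (μ : Measure S)
    (Λ : Set Ω) : ℝ≥0∞ :=
  ∫⁻ x, P x Λ ∂μ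

/-- `P^h_μ(Λ ; t < ζ)`. -/
def PmuT (X : ℝ≥0 → Ω → S) (P : S → @Measure Ω (F0inf X)) (μ : Measure S)
    (t : ℝ≥0) (Λ : Set Ω) : ℝ≥0∞ :=
  ∫⁻ x, P x (Λ ∩ {ω | (t : ℝ≥0∞) < lifetime Δ X ω}) ∂μ

/-- The augmented σ-field `M^μ_t`. -/
def Mmu (α : ℝ) (h : S → ℝ≥0∞) (X : ℝ≥0 → Ω → S)
    (P : S → @Measure Ω (F0inf X)) (μ : Measure S) (t : ℝ≥0) : Set (Set Ω) :=
  {Λ | ∃ Λ' Γ : Set Ω, MeasurableSet[F0 X t] Λ' ∧ MeasurableSet[F0plus X t] Γ ∧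
      symmDiff Λ Λ' ⊆ Γ ∧ ∀ T : ℝ≥0, t < T → Qmu Δ α h X P μ T Γ = 0}

/-- The auxiliary family `G^{μ,1}_t`. -/
def Gmu1 (α : ℝ) (h : S → ℝ≥0∞) (X : ℝ≥0 → Ω → S)
    (P : S → @Measure Ω (F0inf X)) (μ : Measure S) (t : ℝ≥0) : Set (Set Ω) :=
  {Λ | ∃ Λ' Γ : Set Ω, MeasurableSet[F0 X t] Λ' ∧ MeasurableSet[F0plus X t] Γ ∧
      symmDiff Λ Λ' ⊆ Γ ∧ PmuT Δ X P μ t Γ = 0}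

/-- The auxiliary family `G^{μ,2}_t`. -/
def Gmu2 (α : ℝ) (h : S → ℝ≥0∞) (X : ℝ≥0 → Ω → S)
    (P : S → @Measure Ω (F0inf X)) (μ : Measure S) (t : ℝ≥0) : Set (Set Ω) :=
  {Λ | ∃ Λ' Γ : Set Ω, MeasurableSet[F0plus X t] Λ' ∧ MeasurableSet[F0plus X t] Γ ∧
      symmDiff Λ Λ' ⊆ Γ ∧ PmuT Δ X P μ t Γ = 0}

/-- The `P^h_μ`-augmentation `F^{h,μ}_t` of `F⁰_t` in `F⁰_∞`. -/
def Fhmu (X : ℝ≥0 → Ω → S) (P : S → @Measure Ω (F0inf X)) (μ : Measure S)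
    (t : ℝ≥0) : Set (Set Ω) :=
  {Λ | ∃ Λ' Γ : Set Ω, MeasurableSet[F0 X t] Λ' ∧ MeasurableSet[F0inf X] Γ ∧
      symmDiff Λ Λ' ⊆ Γ ∧ Pmu X P μ Γ = 0}

/-- `M_t = ⋂_μ M^μ_t`, the intersection over all probability measures `μ` on `E_Δ`. -/
def Mt (α : ℝ) (h : S → ℝ≥0∞) (X : ℝ≥0 → Ω → S)
    (P : S → @Measure Ω (F0inf X)) (t : ℝ≥0) : Set (Set Ω) :=
  {Λ | ∀ μ : Measure S, IsProbabilityMeasure μ → Λ ∈ Mmu Δ α h X P μ t}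

/-- `M_∞ = σ(⋃_t M_t)`. -/
def Minf (α : ℝ) (h : S → ℝ≥0∞) (X : ℝ≥0 → Ω → S)
    (P : S → @Measure Ω (F0inf X)) : MeasurableSpace Ω :=
  MeasurableSpace.generateFrom {Λ | ∃ t : ℝ≥0, Λ ∈ Mt Δ α h X P t}

/-- `M^μ_∞ = σ(⋃_t M^μ_t)`. -/
def Mmuinf (α : ℝ) (h : S → ℝ≥0∞) (X : ℝ≥0 → Ω → S)
    (P : S → @Measure Ω (F0inf X)) (μ : Measure S) : MeasurableSpace Ω :=
  MeasurableSpace.generateFrom {Λ | ∃ t : ℝ≥0, Λ ∈ Mmu Δ α h X P μ t}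

/-- `M_σ` for an `(M_t)`-stopping time `σ`. -/
def Msigma (α : ℝ) (h : S → ℝ≥0∞) (X : ℝ≥0 → Ω → S)
    (P : S → @Measure Ω (F0inf X)) (σ : Ω → ℝ≥0∞) : Set (Set Ω) :=
  {Λ | MeasurableSet[Minf Δ α h X P] Λ ∧
      ∀ t : ℝ≥0, Λ ∩ {ω | σ ω ≤ (t : ℝ≥0∞)} ∈ Mt Δ α h X P t}

/-- `M^μ_σ` for an `(M^μ_t)`-stopping time `σ`. -/
def Mmusigma (α : ℝ) (h : S → ℝ≥0∞) (X : ℝ≥0 → Ω → S)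
    (P : S → @Measure Ω (F0inf X)) (μ : Measure S) (σ : Ω → ℝ≥0∞) : Set (Set Ω) :=
  {Λ | MeasurableSet[Mmuinf Δ α h X P μ] Λ ∧
      ∀ t : ℝ≥0, Λ ∩ {ω | σ ω ≤ (t : ℝ≥0∞)} ∈ Mmu Δ α h X P μ t}

/-- `F^{h,μ}_T` for an `(F^{h,μ}_t)`-stopping time `T`. -/
def FhmuStop (X : ℝ≥0 → Ω → S) (P : S → @Measure Ω (F0inf X)) (μ : Measure S)
    (T : Ω → ℝ≥0∞) : Set (Set Ω) :=
  {Λ | ∀ t : ℝ≥0, Λ ∩ {ω | T ω ≤ (t : ℝ≥0∞)} ∈ Fhmu X P μ t}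

/-- `X_σ`, with the convention `X_∞ = Δ`. -/
def Xstop (X : ℝ≥0 → Ω → S) (σ : Ω → ℝ≥0∞) (ω : Ω) : S :=
  if σ ω < ∞ then X (σ ω).toNNReal ω else Δ

/-- The shift `θ_σ` at a random time `σ`. -/
def thetaStop (θ : ℝ≥0 → Ω → Ω) (σ : Ω → ℝ≥0∞) (ω : Ω) : Ω :=
  θ (σ ω).toNNReal ω

/-- `Q̄_{x,σ}[f ; σ < ζ] := h(x)·E^h_x[e^{ασ}·f/h(X_σ) ; σ < ζ]`, the σ-finite
distribution up to a stopping time `σ` applied to a nonnegative integrand `f`. -/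
def QbarStop (α : ℝ) (h : S → ℝ≥0∞) (X : ℝ≥0 → Ω → S)
    (P : S → @Measure Ω (F0inf X)) (x : S) (σ : Ω → ℝ≥0∞) (f : Ω → ℝ≥0∞) : ℝ≥0∞ :=
  h x * ∫⁻ ω in {ω | σ ω < lifetime Δ X ω},
      ENNReal.ofReal (Real.exp (α * (σ ω).toReal)) * f ω * (h (Xstop Δ X σ ω))⁻¹ ∂(P x)

/-- `Q̄_{x,σ}(Λ ; σ < ζ)` of a set `Λ`. -/
def QbarStopSet (α : ℝ) (h : S → ℝ≥0∞) (X : ℝ≥0 → Ω → S)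
    (P : S → @Measure Ω (F0inf X)) (x : S) (σ : Ω → ℝ≥0∞) (Λ : Set Ω) : ℝ≥0∞ :=
  QbarStop Δ α h X P x σ (Λ.indicator 1)

/-- The entrance time `D_B = inf {t ≥ 0 : X_t ∈ B}`. -/
def entranceTime (B : Set S) (X : ℝ≥0 → Ω → S) (ω : Ω) : ℝ≥0∞ :=
  ⨅ (t : ℝ≥0) (_ : X t ω ∈ B), (t : ℝ≥0∞)

/-- The hitting time `σ_B = inf {t > 0 : X_t ∈ B}`. -/
def hittingTime (B : Set S) (X : ℝ≥0 → Ω → S) (ω : Ω) : ℝ≥0∞ :=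
  ⨅ (t : ℝ≥0) (_ : 0 < t ∧ X t ω ∈ B), (t : ℝ≥0∞)

/-- A set is universally measurable (`∈ B(E_Δ)*`) if it lies in the completion of
`B(E_Δ)` with respect to every probability measure. -/
def UniversallyMeasurableSet (A : Set S) : Prop :=
  ∀ ν : Measure S, IsProbabilityMeasure ν → NullMeasurableSet A ν

/-- Iterated kernel integral
`∫ κ_{t₁-t₀}(x,dx₁) ∫ κ_{t₂-t₁}(x₁,dx₂) ⋯ f(x₁,…,xₙ)`, where `t₀` is the
starting time. -/
def iterK (κ : ℝ≥0 → S → Measure S) :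
    (n : ℕ) → (Fin (n + 1) → ℝ≥0) → ℝ≥0 → S → ((Fin (n + 1) → S) → ℝ≥0∞) → ℝ≥0∞
  | 0, t, t0, x, f => ∫⁻ y, f (fun _ => y) ∂(κ (t 0 - t0) x)
  | n + 1, t, t0, x, f =>
      ∫⁻ y, iterK κ n (fun i => t i.succ) (t 0) y (fun v => f (Fin.cons y v))
        ∂(κ (t 0 - t0) x)


/-- `γ = (σ + τ∘θ_σ)_ζ`, the time `σ + τ∘θ_σ` truncated to `∞` off `{σ + τ∘θ_σ < ζ}`. -/
def gammaTime (Δ : S) (X : ℝ≥0 → Ω → S) (θ : ℝ≥0 → Ω → Ω) (σ τ : Ω → ℝ≥0∞)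
    (ω : Ω) : ℝ≥0∞ :=
  if σ ω + τ (thetaStop θ σ ω) < lifetime Δ X ω then σ ω + τ (thetaStop θ σ ω)
  else ∞


section MyHelpers

set_option linter.unusedSectionVars false

lemma measurable_X_F0inf (X : ℝ≥0 → Ω → S) (s : ℝ≥0) :
    @Measurable Ω S (F0inf X) _ (X s) := by
  intro A hA
  exact le_iSup (fun u => MeasurableSpace.comap (X u) inferInstance) s _ ⟨A, hA, rfl⟩

lemma F0_le_F0inf (X : ℝ≥0 → Ω → S) (s : ℝ≥0) : F0 X s ≤ F0inf X :=
  iSup₂_le fun u _ => le_iSup (fun u => MeasurableSpace.comap (X u) inferInstance) u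

lemma F0_mono (X : ℝ≥0 → Ω → S) {s u : ℝ≥0} (h : s ≤ u) : F0 X s ≤ F0 X u :=
  iSup₂_le fun v hv =>
    le_iSup₂ (f := fun (v : ℝ≥0) (_ : v ∈ Set.Iic u) => MeasurableSpace.comap (X v) inferInstance)
      v (le_trans hv h)

lemma F0plus_le_F0 (X : ℝ≥0 → Ω → S) {t s : ℝ≥0} (h : t < s) : F0plus X t ≤ F0 X s :=
  iInf₂_le s h

lemma F0plus_mono (X : ℝ≥0 → Ω → S) {t u : ℝ≥0} (h : t ≤ u) : F0plus X t ≤ F0plus X u :=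
  le_iInf₂ fun v hv => iInf₂_le v (lt_of_le_of_lt h hv)

lemma F0plus_le_F0inf (X : ℝ≥0 → Ω → S) (t : ℝ≥0) : F0plus X t ≤ F0inf X :=
  le_trans (F0plus_le_F0 X (lt_add_one t)) (F0_le_F0inf X (t + 1))

lemma measurableSet_F0plus (X : ℝ≥0 → Ω → S) {t : ℝ≥0} {A : Set Ω}
    (hA : ∀ u : ℝ≥0, t < u → MeasurableSet[F0 X u] A) :
    MeasurableSet[F0plus X t] A := by
  rw [F0plus, iInf_subtype']
  rw [MeasurableSpace.measurableSet_iInf]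
  exact fun u => hA u.1 u.2

lemma lifetime_le (Δ : S) (X : ℝ≥0 → Ω → S) {ω : Ω} {u : ℝ≥0} (hu : X u ω = Δ) :
    lifetime Δ X ω ≤ (u : ℝ≥0∞) :=
  iInf₂_le u hu

lemma lt_lifetime_iff (Δ : S) (X : ℝ≥0 → Ω → S)
    (hX_absorb : ∀ (ω : Ω) (s t : ℝ≥0), s ≤ t → X s ω = Δ → X t ω = Δ)
    (T : ℝ≥0) (ω : Ω) :
    (T : ℝ≥0∞) < lifetime Δ X ω ↔
      ∃ q : ℚ, 0 ≤ q ∧ (T : ℝ) < (q : ℝ) ∧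
        ∀ p : ℚ, 0 ≤ p → p < q → X (Real.toNNReal p) ω ≠ Δ := by
  constructor
  · intro hT
    obtain ⟨q, hq0, hTq, hqlt⟩ := ENNReal.lt_iff_exists_rat_btwn.1 hT
    have hq0R : (0:ℝ) ≤ (q:ℝ) := by exact_mod_cast hq0
    refine ⟨q, hq0, ?_, ?_⟩
    · have : (T : ℝ≥0) < Real.toNNReal q := ENNReal.coe_lt_coe.1 hTq
      calc (T : ℝ) < (Real.toNNReal q : ℝ) := NNReal.coe_lt_coe.2 this
        _ = q := Real.coe_toNNReal _ hq0R
    · intro p hp0 hpq hX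
      have hle : lifetime Δ X ω ≤ (Real.toNNReal p : ℝ≥0∞) := lifetime_le Δ X hX
      have hlt : (Real.toNNReal p : ℝ≥0∞) < (Real.toNNReal q : ℝ≥0∞) := by
        have : Real.toNNReal p < Real.toNNReal q := by
          have hq0' : (0 : ℝ) < q := lt_of_le_of_lt (by positivity) ((Rat.cast_lt (K := ℝ)).2 hpq)
          exact (Real.toNNReal_lt_toNNReal_iff hq0').2 ((Rat.cast_lt (K := ℝ)).2 hpq)
        exact_mod_cast this
      exact absurd (lt_of_le_of_lt hle (lt_of_lt_of_le hlt hqlt.le)) (lt_irrefl _)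
  · rintro ⟨q, hq0, hTq, hall⟩
    have hq0R : (0:ℝ) ≤ (q:ℝ) := by exact_mod_cast hq0
    have hge : (Real.toNNReal q : ℝ≥0∞) ≤ lifetime Δ X ω := by
      refine le_iInf fun u => le_iInf fun hu => ?_
      rw [ENNReal.coe_le_coe]
      by_contra hlt
      push_neg at hlt
      have hu' : (u : ℝ) < q := by
        have := NNReal.coe_lt_coe.2 hlt
        rwa [Real.coe_toNNReal _ hq0R] at this
      obtain ⟨p, hup, hpq⟩ := exists_rat_btwn hu'
      have hp0 : (0 : ℝ) ≤ p := le_of_lt (lt_of_le_of_lt u.coe_nonneg hup)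
      refine hall p (by exact_mod_cast hp0) (by exact_mod_cast hpq) ?_
      refine hX_absorb ω u _ ?_ hu
      rw [← NNReal.coe_le_coe, Real.coe_toNNReal _ hp0]
      exact hup.le
    have hlt : (T : ℝ≥0∞) < (Real.toNNReal q : ℝ≥0∞) := by
      rw [ENNReal.coe_lt_coe, ← NNReal.coe_lt_coe, Real.coe_toNNReal _ hq0R]
      exact hTq
    exact lt_of_lt_of_le hlt hge

lemma measurableSet_lt_lifetime [MeasurableSingletonClass S] (Δ : S) (X : ℝ≥0 → Ω → S)
    (hX_absorb : ∀ (ω : Ω) (s t : ℝ≥0), s ≤ t → X s ω = Δ → X t ω = Δ)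
    (T : ℝ≥0) :
    MeasurableSet[F0inf X] {ω | (T : ℝ≥0∞) < lifetime Δ X ω} := by
  have hEq : {ω | (T : ℝ≥0∞) < lifetime Δ X ω} =
      ⋃ (q : ℚ), ⋃ (_ : 0 ≤ q ∧ (T : ℝ) < (q : ℝ)),
        ⋂ (p : ℚ), ⋂ (_ : 0 ≤ p ∧ p < q), {ω | X (Real.toNNReal p) ω ≠ Δ} := by
    ext ω
    simp only [Set.mem_setOf_eq, Set.mem_iUnion, Set.mem_iInter, lt_lifetime_iff Δ X hX_absorb]
    constructor
    · rintro ⟨q, h1, h2, h3⟩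
      exact ⟨q, ⟨h1, h2⟩, fun p hp => h3 p hp.1 hp.2⟩
    · rintro ⟨q, ⟨h1, h2⟩, h3⟩
      exact ⟨q, h1, h2, fun p hp1 hp2 => h3 p ⟨hp1, hp2⟩⟩
  rw [hEq]
  refine MeasurableSet.iUnion fun q => MeasurableSet.iUnion fun _ =>
    MeasurableSet.iInter fun p => MeasurableSet.iInter fun _ => ?_
  exact @MeasurableSet.compl Ω _ (F0inf X)
    ((measurable_X_F0inf X (Real.toNNReal p)) (measurableSet_singleton Δ))

lemma iInter_eq_iInter_add {α : Type*} (U : ℕ → Set α) (hU : ∀ n, U (n + 1) ⊆ U n) (N₀ : ℕ) :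
    ⋂ n, U n = ⋂ n, U (n + N₀) := by
  have hA : Antitone U := antitone_nat_of_succ_le hU
  ext x
  simp only [Set.mem_iInter]
  exact ⟨fun h n => h _, fun h n => hA (Nat.le_add_right n N₀) (h n)⟩

end MyHelpers

end


theorem Mmu_plus_eq_Gmu2
    {S : Type*} [MeasurableSpace S] [TopologicalSpace S] [BorelSpace S]
    [StandardBorelSpace S] {Ω : Type*} (Δ : S)
    (X : ℝ≥0 → Ω → S) (θ : ℝ≥0 → Ω → Ω) (P : S → @Measure Ω (F0inf X))
    (h : S → ℝ≥0∞) (α : ℝ) (hα : 0 < α)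
    (h_meas : Measurable h) (h_cem : h Δ = 0)
    (h_pos : ∀ x : S, x ≠ Δ → 0 < h x ∧ h x < ∞)
    (hX_rc : ∀ (ω : Ω) (t : ℝ≥0),
      Filter.Tendsto (fun s => X s ω) (nhdsWithin t (Set.Ioi t)) (nhds (X t ω)))
    (hX_absorb : ∀ (ω : Ω) (s t : ℝ≥0), s ≤ t → X s ω = Δ → X t ω = Δ)
    (hshift : ∀ (s t : ℝ≥0) (ω : Ω), X t (θ s ω) = X (t + s) ω)
    (hP_prob : ∀ x : S, IsProbabilityMeasure (P x))
    (hP_meas : ∀ Λ : Set Ω, MeasurableSet[F0inf X] Λ → Measurable fun x => P x Λ)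
    (hP_start : ∀ x : S, P x {ω | X 0 ω = x} = 1)
    (hMarkov : ∀ (s : ℝ≥0) (x : S) (Y : Ω → ℝ≥0∞), Measurable[F0inf X] Y →
      ∀ Λ : Set Ω, MeasurableSet[F0plus X s] Λ →
        ∫⁻ ω in Λ, Y (θ s ω) ∂(P x)
          = ∫⁻ ω in Λ, (∫⁻ ω', Y ω' ∂(P (X s ω))) ∂(P x))
    :
    ∀ (μ : Measure S), IsProbabilityMeasure μ → ∀ t : ℝ≥0,
      {Λ : Set Ω | ∀ s : ℝ≥0, t < s → Λ ∈ Mmu Δ α h X P μ s}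
        = Gmu2 Δ α h X P μ t := by
  intro μ hμ t
  have hAmeas : ∀ T : ℝ≥0, MeasurableSet[F0inf X] {ω | (T : ℝ≥0∞) < lifetime Δ X ω} :=
    fun T => measurableSet_lt_lifetime Δ X hX_absorb T
  have h_fin : ∀ y : S, h y ≠ ⊤ := by
    intro y
    by_cases hy : y = Δ
    · rw [hy, h_cem]; exact ENNReal.zero_ne_top
    · exact (h_pos y hy).2.ne
  -- vanishing at the cemetery start
  have hPzero : ∀ x : S, h x = 0 → ∀ (T : ℝ≥0) (A : Set Ω),
      P x (A ∩ {ω | (T : ℝ≥0∞) < lifetime Δ X ω}) = 0 := by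
    intro x hx T A
    have hxΔ : x = Δ := by
      by_contra hne
      exact (h_pos x hne).1.ne' hx
    rw [hxΔ]
    have hsub : A ∩ {ω | (T : ℝ≥0∞) < lifetime Δ X ω} ⊆ {ω | X 0 ω = Δ}ᶜ := by
      rintro ω ⟨-, hT⟩ h0
      have hle : lifetime Δ X ω ≤ ((0 : ℝ≥0) : ℝ≥0∞) := lifetime_le Δ X h0
      have : (T : ℝ≥0∞) < ((0 : ℝ≥0) : ℝ≥0∞) := lt_of_lt_of_le hT hle
      exact absurd (ENNReal.coe_lt_coe.1 this) (by simp)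
    refine measure_mono_null hsub ?_
    haveI := hP_prob Δ
    have hm : MeasurableSet[F0inf X] {ω | X 0 ω = Δ} :=
      (measurable_X_F0inf X 0) (measurableSet_singleton Δ)
    rw [measure_compl hm (measure_ne_top _ _), hP_start Δ, measure_univ]
    simp
  -- if P x (Γ ∩ {t' < ζ}) = 0 then Qbar of Γ at any later time vanishes
  have hQle : ∀ (x : S) (T t' : ℝ≥0), t' ≤ T → ∀ Γ : Set Ω, MeasurableSet[F0inf X] Γ →
      P x (Γ ∩ {ω | (t' : ℝ≥0∞) < lifetime Δ X ω}) = 0 →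
      QbarSet Δ α h X P x T Γ = 0 := by
    intro x T t' htT Γ hΓ hx0
    have hsub : Γ ∩ {ω | (T : ℝ≥0∞) < lifetime Δ X ω}
        ⊆ Γ ∩ {ω | (t' : ℝ≥0∞) < lifetime Δ X ω} := by
      refine Set.inter_subset_inter_right _ fun ω hω => ?_
      exact lt_of_le_of_lt (ENNReal.coe_le_coe.2 htT) hω
    have h0' : P x (Γ ∩ {ω | (T : ℝ≥0∞) < lifetime Δ X ω}) = 0 :=
      le_antisymm (hx0 ▸ measure_mono hsub) zero_le
    have hI : ∫⁻ ω in {ω | (T : ℝ≥0∞) < lifetime Δ X ω},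
        ENNReal.ofReal (Real.exp (α * (T : ℝ))) * Γ.indicator 1 ω * (h (X T ω))⁻¹ ∂(P x) = 0 := by
      refine le_antisymm ?_ zero_le
      calc ∫⁻ ω in {ω | (T : ℝ≥0∞) < lifetime Δ X ω},
            ENNReal.ofReal (Real.exp (α * (T : ℝ))) * Γ.indicator 1 ω * (h (X T ω))⁻¹ ∂(P x)
          ≤ ∫⁻ ω in {ω | (T : ℝ≥0∞) < lifetime Δ X ω},
            Γ.indicator (fun _ => (⊤ : ℝ≥0∞)) ω ∂(P x) := by
            refine lintegral_mono fun ω => ?_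
            by_cases hω : ω ∈ Γ
            · simp [Set.indicator_of_mem hω]
            · simp [Set.indicator_of_notMem hω]
        _ = ⊤ * (P x).restrict {ω | (T : ℝ≥0∞) < lifetime Δ X ω} Γ :=
            lintegral_indicator_const hΓ ⊤
        _ = ⊤ * P x (Γ ∩ {ω | (T : ℝ≥0∞) < lifetime Δ X ω}) := by
            rw [Measure.restrict_apply hΓ]
        _ = 0 := by rw [h0', mul_zero]
    unfold QbarSet Qbar
    rw [hI, mul_zero]
  -- the key a.e. vanishing lemma for the hard direction
  have hkey : ∀ (T : ℝ≥0) (Γn : Set Ω), MeasurableSet[F0inf X] Γn →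
      Qmu Δ α h X P μ T Γn = 0 → ∀ m : ℕ,
      ∀ᵐ x ∂μ, h x * P x (Γn ∩ {ω | h (X T ω) ≤ (m : ℝ≥0∞) + 1}
        ∩ {ω | (T : ℝ≥0∞) < lifetime Δ X ω}) = 0 := by
    intro T Γn hΓn hQ0 m
    set c : ℝ≥0∞ := ENNReal.ofReal (Real.exp (α * (T : ℝ))) with hc
    set B : Set Ω := Γn ∩ {ω | h (X T ω) ≤ (m : ℝ≥0∞) + 1}
      ∩ {ω | (T : ℝ≥0∞) < lifetime Δ X ω} with hBdef
    have hXTm : @Measurable Ω ℝ≥0∞ (F0inf X) _ (fun ω => h (X T ω)) :=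
      h_meas.comp (measurable_X_F0inf X T)
    have hBmeas : MeasurableSet[F0inf X] B :=
      (hΓn.inter (hXTm measurableSet_Iic)).inter (hAmeas T)
    have hBsub : B ⊆ {ω | (T : ℝ≥0∞) < lifetime Δ X ω} := Set.inter_subset_right
    have hlow : ∀ x, c * ((m : ℝ≥0∞) + 1)⁻¹ * (h x * P x B) ≤ QbarSet Δ α h X P x T Γn := by
      intro x
      have hpt : ∀ ω, B.indicator (fun _ => c * ((m : ℝ≥0∞) + 1)⁻¹) ω ≤
          c * Γn.indicator 1 ω * (h (X T ω))⁻¹ := by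
        intro ω
        by_cases hω : ω ∈ B
        · rw [Set.indicator_of_mem hω]
          obtain ⟨⟨h1, h2⟩, -⟩ := hω
          rw [Set.indicator_of_mem h1, Pi.one_apply, mul_one]
          exact mul_le_mul_right (ENNReal.inv_le_inv.2 h2) c
        · rw [Set.indicator_of_notMem hω]; exact zero_le
      have hint : c * ((m : ℝ≥0∞) + 1)⁻¹ * P x B ≤
          ∫⁻ ω in {ω | (T : ℝ≥0∞) < lifetime Δ X ω},
            c * Γn.indicator 1 ω * (h (X T ω))⁻¹ ∂(P x) := by
        have := lintegral_mono (μ := (P x).restrict {ω | (T : ℝ≥0∞) < lifetime Δ X ω}) hpt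
        rwa [lintegral_indicator_const hBmeas, Measure.restrict_apply hBmeas,
          Set.inter_eq_self_of_subset_left hBsub] at this
      calc c * ((m : ℝ≥0∞) + 1)⁻¹ * (h x * P x B)
          = h x * (c * ((m : ℝ≥0∞) + 1)⁻¹ * P x B) := by ring
        _ ≤ h x * ∫⁻ ω in {ω | (T : ℝ≥0∞) < lifetime Δ X ω},
            c * Γn.indicator 1 ω * (h (X T ω))⁻¹ ∂(P x) := mul_le_mul_right hint (h x)
    have hcnt : c * ((m : ℝ≥0∞) + 1)⁻¹ ≠ ⊤ :=
      ENNReal.mul_ne_top ENNReal.ofReal_ne_top (ENNReal.inv_ne_top.2 (by simp))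
    have hcnz : c * ((m : ℝ≥0∞) + 1)⁻¹ ≠ 0 := by
      apply mul_ne_zero
      · exact (ENNReal.ofReal_pos.2 (Real.exp_pos _)).ne'
      · exact ENNReal.inv_ne_zero.2 (by simp)
    have hint0 : ∫⁻ x, h x * P x B ∂μ = 0 := by
      have h1 : c * ((m : ℝ≥0∞) + 1)⁻¹ * ∫⁻ x, h x * P x B ∂μ ≤ 0 := by
        rw [← lintegral_const_mul' _ _ hcnt, ← hQ0]
        exact lintegral_mono fun x => hlow x
      rcases mul_eq_zero.1 (le_antisymm h1 zero_le) with h' | h'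
      · exact absurd h' hcnz
      · exact h'
    exact (lintegral_eq_zero_iff (h_meas.mul (hP_meas B hBmeas))).1 hint0
  ext Λ
  simp only [Set.mem_setOf_eq]
  constructor
  · -- hard direction
    intro hΛ
    set s : ℕ → ℝ≥0 := fun n => t + ((n : ℝ≥0) + 1)⁻¹ with hsdef
    have hts : ∀ n, t < s n := fun n => lt_add_of_pos_right t (by positivity)
    have hs_lt : ∀ {N n : ℕ}, N < n → s n < s N := by
      intro N n hNn
      refine add_lt_add_right ?_ t
      rw [← NNReal.coe_lt_coe]
      push_cast
      refine inv_strictAnti₀ (by positivity) ?_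
      exact_mod_cast Nat.succ_lt_succ hNn
    have hs_anti : ∀ {a b : ℕ}, a ≤ b → s b ≤ s a := by
      intro a b hab
      rcases eq_or_lt_of_le hab with rfl | hlt
      · exact le_refl _
      · exact (hs_lt hlt).le
    have hs_exists : ∀ {u : ℝ≥0}, t < u → ∃ N, s N < u := by
      intro u hu
      obtain ⟨N, hN⟩ := exists_nat_one_div_lt (sub_pos.2 (NNReal.coe_lt_coe.2 hu))
      refine ⟨N, ?_⟩
      show t + ((N : ℝ≥0) + 1)⁻¹ < u
      rw [← NNReal.coe_lt_coe]
      push_cast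
      simp only [one_div] at hN
      push_cast
      linarith
    have hs_existsE : ∀ {z : ℝ≥0∞}, (t : ℝ≥0∞) < z → ∃ N, ((s N : ℝ≥0) : ℝ≥0∞) < z := by
      intro z hz
      induction z using ENNReal.recTopCoe with
      | top => exact ⟨0, ENNReal.coe_lt_top⟩
      | coe u =>
        obtain ⟨N, hN⟩ := hs_exists (ENNReal.coe_lt_coe.1 hz)
        exact ⟨N, ENNReal.coe_lt_coe.2 hN⟩
    have hΛ' : ∀ n : ℕ, ∃ Λ' Γ : Set Ω, MeasurableSet[F0 X (s n)] Λ' ∧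
        MeasurableSet[F0plus X (s n)] Γ ∧ symmDiff Λ Λ' ⊆ Γ ∧
        ∀ T : ℝ≥0, s n < T → Qmu Δ α h X P μ T Γ = 0 := fun n => hΛ (s n) (hts n)
    choose L G hL hG hsub hQ using hΛ'
    set U : ℕ → Set Ω := fun N => ⋃ k, L (N + k) with hUdef
    set V : ℕ → Set Ω := fun N => ⋃ k, G (N + k) with hVdef
    have hUdec : ∀ N, U (N + 1) ⊆ U N := by
      intro N
      refine Set.iUnion_subset fun k => ?_
      rw [show N + 1 + k = N + (k + 1) by omega]
      exact Set.subset_iUnion (fun k => L (N + k)) (k + 1)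
    have hVdec : ∀ N, V (N + 1) ⊆ V N := by
      intro N
      refine Set.iUnion_subset fun k => ?_
      rw [show N + 1 + k = N + (k + 1) by omega]
      exact Set.subset_iUnion (fun k => G (N + k)) (k + 1)
    set Λs : Set Ω := ⋂ N, U N with hΛsdef
    set Γs : Set Ω := ⋂ N, V N with hΓsdef
    have hΛsm : MeasurableSet[F0plus X t] Λs := by
      refine measurableSet_F0plus X fun u hu => ?_
      obtain ⟨N₀, hN₀⟩ := hs_exists hu
      rw [hΛsdef, iInter_eq_iInter_add U hUdec N₀]
      refine MeasurableSet.iInter fun N => MeasurableSet.iUnion fun k => ?_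
      exact (F0_mono X ((hs_anti (by omega)).trans hN₀.le)) _ (hL _)
    have hΓsm : MeasurableSet[F0plus X t] Γs := by
      refine measurableSet_F0plus X fun u hu => ?_
      obtain ⟨N₀, hN₀⟩ := hs_exists hu
      rw [hΓsdef, iInter_eq_iInter_add V hVdec N₀]
      refine MeasurableSet.iInter fun N => MeasurableSet.iUnion fun k => ?_
      exact (F0plus_le_F0 X (lt_of_le_of_lt (hs_anti (by omega)) hN₀)) _ (hG _)
    have hsd : symmDiff Λ Λs ⊆ Γs := by
      intro ω hω
      rw [Set.mem_symmDiff] at hω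
      refine Set.mem_iInter.2 fun M => ?_
      rcases hω with ⟨hωΛ, hωn⟩ | ⟨hωΛ', hωn⟩
      · rw [hΛsdef, Set.mem_iInter] at hωn
        push_neg at hωn
        obtain ⟨N, hN⟩ := hωn
        rw [hUdef, Set.mem_iUnion] at hN
        push_neg at hN
        refine Set.mem_iUnion.2 ⟨N, hsub (M + N) ?_⟩
        rw [Set.mem_symmDiff]
        left
        refine ⟨hωΛ, ?_⟩
        have := hN M
        rwa [Nat.add_comm N M] at this
      · rw [hΛsdef, Set.mem_iInter] at hωΛ'
        obtain ⟨k, hk⟩ := Set.mem_iUnion.1 (hωΛ' M)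
        refine Set.mem_iUnion.2 ⟨k, hsub (M + k) ?_⟩
        rw [Set.mem_symmDiff]
        right
        exact ⟨hk, hωn⟩
    have hae : ∀ᵐ x ∂μ, ∀ N k m : ℕ,
        h x * P x (G (N + 1 + k) ∩ {ω | h (X (s N) ω) ≤ (m : ℝ≥0∞) + 1}
          ∩ {ω | ((s N : ℝ≥0) : ℝ≥0∞) < lifetime Δ X ω}) = 0 := by
      rw [ae_all_iff]
      intro N
      rw [ae_all_iff]
      intro k
      rw [ae_all_iff]
      intro m
      exact hkey (s N) (G (N + 1 + k)) ((F0plus_le_F0inf X _) _ (hG _))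
        (hQ (N + 1 + k) (s N) (hs_lt (by omega))) m
    have hfinal : ∀ᵐ x ∂μ, P x (Γs ∩ {ω | (t : ℝ≥0∞) < lifetime Δ X ω}) = 0 := by
      filter_upwards [hae] with x hx
      by_cases hx0 : h x = 0
      · exact hPzero x hx0 t _
      · have hB0 : ∀ N k m : ℕ,
            P x (G (N + 1 + k) ∩ {ω | h (X (s N) ω) ≤ (m : ℝ≥0∞) + 1}
              ∩ {ω | ((s N : ℝ≥0) : ℝ≥0∞) < lifetime Δ X ω}) = 0 := by
          intro N k m
          rcases mul_eq_zero.1 (hx N k m) with h' | h'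
          · exact absurd h' hx0
          · exact h'
        refine measure_mono_null ?_ (measure_iUnion_null fun N =>
          measure_iUnion_null fun k => measure_iUnion_null fun m => hB0 N k m)
        rintro ω ⟨hωΓ, hωt⟩
        obtain ⟨N, hN⟩ := hs_existsE hωt
        obtain ⟨k, hk⟩ := Set.mem_iUnion.1 (Set.mem_iInter.1 hωΓ (N + 1))
        obtain ⟨m, hm⟩ := ENNReal.exists_nat_gt (h_fin (X (s N) ω))
        exact Set.mem_iUnion.2 ⟨N, Set.mem_iUnion.2 ⟨k, Set.mem_iUnion.2
          ⟨m, ⟨⟨hk, hm.le.trans le_self_add⟩, hN⟩⟩⟩⟩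
    refine ⟨Λs, Γs, hΛsm, hΓsm, hsd, ?_⟩
    unfold PmuT
    calc ∫⁻ x, P x (Γs ∩ {ω | (t : ℝ≥0∞) < lifetime Δ X ω}) ∂μ
        = ∫⁻ x, 0 ∂μ := lintegral_congr_ae hfinal
      _ = 0 := lintegral_zero
  · -- easy direction
    rintro ⟨Λ', Γ, hΛ', hΓ, hsd, hP0⟩ u hu
    refine ⟨Λ', Γ, (F0plus_le_F0 X hu) _ hΛ', (F0plus_mono X hu.le) _ hΓ, hsd, ?_⟩
    intro T hT
    have hΓinf : MeasurableSet[F0inf X] Γ := (F0plus_le_F0inf X t) _ hΓ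
    have hmeas : Measurable fun x => P x (Γ ∩ {ω | (t : ℝ≥0∞) < lifetime Δ X ω}) :=
      hP_meas _ (hΓinf.inter (hAmeas t))
    unfold PmuT at hP0
    have hae : ∀ᵐ x ∂μ, P x (Γ ∩ {ω | (t : ℝ≥0∞) < lifetime Δ X ω}) = 0 :=
      (lintegral_eq_zero_iff hmeas).1 hP0
    unfold Qmu
    calc ∫⁻ x, QbarSet Δ α h X P x T Γ ∂μ
        = ∫⁻ x, 0 ∂μ := by
          refine lintegral_congr_ae ?_
          filter_upwards [hae] with x hx
          exact hQle x T t (le_of_lt (hu.trans hT)) Γ hΓinf hx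
      _ = 0 := lintegral_zero
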